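/- arXiv:1806.04732 — 2 statements merged into one kernel-verified Lean document; each statement's English description precedes it below -/
import Mathlib

section
/- Let sqrt((sqrt(5)-1)/2) < r < 1 and 0 < α < 1 be fixed. Define f(d) = sqrt(α * 2^d * (1 - r^d)) and g(d) = 2α / (r^d * (sqrt(1 + 2α(sqrt(1-r^2)/r^2)^d) + 1)). Then f(d)/g(d) tends to infinity as d → ∞. -/
theorem stmt_8 (r α : ℝ) (hr0 : Real.sqrt ((Real.sqrt 5 - 1) / 2) < r) (hr1 : r < 1)
    (hα0 : 0 < α) (hα1 : α < 1) :
    Filter.Tendsto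
      (fun d : ℕ =>
        Real.sqrt (α * 2 ^ d * (1 - r ^ d)) /
          (2 * α / (r ^ d * (Real.sqrt (1 + 2 * α * (Real.sqrt (1 - r ^ 2) / r ^ 2) ^ d) + 1))))
      Filter.atTop Filter.atTop := by
  have h5 : (2:ℝ) ≤ Real.sqrt 5 := by
    rw [show (2:ℝ) = Real.sqrt 4 by
      rw [show (4:ℝ) = 2 ^ 2 by norm_num, Real.sqrt_sq (by norm_num : (0:ℝ) ≤ 2)]]
    exact Real.sqrt_le_sqrt (by norm_num)
  have hhalf : Real.sqrt (1/2) < r :=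
    lt_of_le_of_lt (Real.sqrt_le_sqrt (by linarith)) hr0
  have hrpos : 0 < r := lt_of_le_of_lt (Real.sqrt_nonneg _) hhalf
  have h1lt : 1 < Real.sqrt 2 * r := by
    have h2 : Real.sqrt 2 * Real.sqrt (1/2) = 1 := by
      rw [← Real.sqrt_mul (by norm_num : (0:ℝ) ≤ 2)]
      norm_num
    calc 1 = Real.sqrt 2 * Real.sqrt (1/2) := h2.symm
      _ < Real.sqrt 2 * r := by
          apply mul_lt_mul_of_pos_left hhalf
          positivity
  have hCpos : 0 < Real.sqrt (α/2) / α := by positivity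
  refine Filter.tendsto_atTop_mono' _ ?_
    ((tendsto_pow_atTop_atTop_of_one_lt h1lt).const_mul_atTop hCpos
      )
  · have hsmall := tendsto_pow_atTop_nhds_zero_of_lt_one hrpos.le hr1
    filter_upwards [hsmall.eventually (eventually_le_nhds (by norm_num : (0:ℝ) < 1/2))]
      with d hd
    rw [div_div_eq_mul_div, le_div_iff₀ (by positivity)]
    have ha : Real.sqrt (α/2) * (Real.sqrt 2) ^ d ≤ Real.sqrt (α * 2 ^ d * (1 - r ^ d)) := by
      have hp : ∀ n : ℕ, Real.sqrt ((2:ℝ) ^ n) = Real.sqrt 2 ^ n := by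
        intro n
        induction n with
        | zero => simp
        | succ k ih => rw [pow_succ, pow_succ, Real.sqrt_mul (by positivity), ih]
      rw [← hp, ← Real.sqrt_mul (by positivity)]
      apply Real.sqrt_le_sqrt
      have h2d : (0:ℝ) < 2 ^ d := by positivity
      nlinarith [mul_nonneg (mul_nonneg hα0.le h2d.le)
        (by linarith : (0:ℝ) ≤ 1/2 - r ^ d)]
    have hX : 2 * r ^ d ≤
        r ^ d * (Real.sqrt (1 + 2 * α * (Real.sqrt (1 - r ^ 2) / r ^ 2) ^ d) + 1) := by
      have hs : 1 ≤ Real.sqrt (1 + 2 * α * (Real.sqrt (1 - r ^ 2) / r ^ 2) ^ d) := by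
        rw [Real.one_le_sqrt]
        have : (0:ℝ) ≤ 2 * α * (Real.sqrt (1 - r ^ 2) / r ^ 2) ^ d := by positivity
        linarith
      have hrd : (0:ℝ) < r ^ d := by positivity
      nlinarith
    calc Real.sqrt (α/2) / α * (Real.sqrt 2 * r) ^ d * (2 * α)
        = Real.sqrt (α/2) * (Real.sqrt 2) ^ d * (2 * r ^ d) := by
          rw [mul_pow]; field_simp
      _ ≤ Real.sqrt (α * 2 ^ d * (1 - r ^ d)) *
          (r ^ d * (Real.sqrt (1 + 2 * α * (Real.sqrt (1 - r ^ 2) / r ^ 2) ^ d) + 1)) := by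
          apply mul_le_mul ha hX (by positivity) (Real.sqrt_nonneg _)
end

section
/- Let 0 < r < sqrt((sqrt(5)-1)/2) and 0 < α < 1 be fixed. Define f(d) = sqrt(α * 2^d * (1 - r^d)) and g(d) = 2α / (r^d * (sqrt(1 + 2α(sqrt(1-r^2)/r^2)^d) + 1)). Then f(d)/g(d) tends to infinity as d → ∞. -/
open Filter Real

lemma sqrt_pow_nat' (x : ℝ) (hx : 0 ≤ x) (n : ℕ) : Real.sqrt x ^ n = Real.sqrt (x ^ n) := by
  induction n with
  | zero => simp
  | succ n ih => rw [pow_succ, pow_succ, ih, ← Real.sqrt_mul (pow_nonneg hx n)]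

theorem stmt_9 (r α : ℝ) (hr0 : 0 < r) (hr1 : r < Real.sqrt ((Real.sqrt 5 - 1) / 2))
    (hα0 : 0 < α) (hα1 : α < 1) :
    Filter.Tendsto
      (fun d : ℕ =>
        Real.sqrt (α * 2 ^ d * (1 - r ^ d)) /
          (2 * α / (r ^ d * (Real.sqrt (1 + 2 * α * (Real.sqrt (1 - r ^ 2) / r ^ 2) ^ d) + 1))))
      Filter.atTop Filter.atTop := by
  have h5 : Real.sqrt 5 < 5/2 := by
    rw [show (5:ℝ)/2 = Real.sqrt ((5/2)^2) by rw [Real.sqrt_sq]; norm_num]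
    apply Real.sqrt_lt_sqrt <;> norm_num
  have hr2 : r^2 < 3/4 := by
    have h2 : r^2 < (Real.sqrt 5 - 1)/2 := by
      have := Real.sq_sqrt (show (0:ℝ) ≤ (Real.sqrt 5 - 1)/2 by
        have : (1:ℝ) ≤ Real.sqrt 5 := by
          rw [show (1:ℝ) = Real.sqrt 1 by simp]
          apply Real.sqrt_le_sqrt; norm_num
        linarith)
      nlinarith [hr1, Real.sqrt_nonneg ((Real.sqrt 5 - 1)/2)]
    linarith
  have hrlt1 : r < 1 := by nlinarith
  set s := Real.sqrt (1 - r^2) with hs_def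
  have hs : 1/2 < s := by
    rw [hs_def, show (1:ℝ)/2 = Real.sqrt (1/4) by
      rw [show (1:ℝ)/4 = ((1:ℝ)/2)^2 by norm_num, Real.sqrt_sq]; norm_num]
    apply Real.sqrt_lt_sqrt <;> linarith
  set c := s / r^2 with hc_def
  have hc0 : 0 < c := div_pos (by linarith) (by positivity)
  set β := Real.sqrt 2 * (r * Real.sqrt c) with hβ_def
  have hβ0 : 0 < β := by positivity
  have hβsq : β^2 = 2 * s := by
    rw [hβ_def, mul_pow, mul_pow, Real.sq_sqrt (by norm_num : (0:ℝ) ≤ 2),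
      Real.sq_sqrt hc0.le, hc_def]
    field_simp
  have hβ1 : 1 < β := by nlinarith
  have h2α : (0:ℝ) < 2 * α := by linarith
  set C := Real.sqrt (α * (1-r)) * Real.sqrt (2*α) / (2*α) with hC_def
  have hC : 0 < C := by
    apply div_pos _ h2α
    apply mul_pos <;> apply Real.sqrt_pos.mpr
    · nlinarith
    · linarith
  have htend : Tendsto (fun d : ℕ => C * β^d) atTop atTop :=
    (tendsto_pow_atTop_atTop_of_one_lt hβ1).const_mul_atTop hC
  refine tendsto_atTop_mono' _ ?_ htend
  filter_upwards [eventually_ge_atTop 1] with d hd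
  set S := Real.sqrt (1 + 2 * α * c ^ d) with hS_def
  have hrd0 : (0:ℝ) < r^d := by positivity
  have hS0 : 0 ≤ S := Real.sqrt_nonneg _
  have hrd : r^d ≤ r := by
    calc r^d ≤ r^1 := pow_le_pow_of_le_one hr0.le hrlt1.le hd
    _ = r := pow_one r
  have h1 : Real.sqrt (α * (1-r)) * Real.sqrt 2 ^ d ≤ Real.sqrt (α * 2 ^ d * (1 - r ^ d)) := by
    rw [sqrt_pow_nat' 2 (by norm_num), ← Real.sqrt_mul (by nlinarith : (0:ℝ) ≤ α * (1-r))]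
    apply Real.sqrt_le_sqrt
    nlinarith [mul_nonneg (mul_pos hα0 (pow_pos (show (0:ℝ) < 2 by norm_num) d)).le
      (sub_nonneg.mpr hrd)]
  have h2 : Real.sqrt (2*α) * Real.sqrt c ^ d ≤ S + 1 := by
    rw [sqrt_pow_nat' c hc0.le, ← Real.sqrt_mul h2α.le]
    have : Real.sqrt (2 * α * c ^ d) ≤ S := by
      rw [hS_def]
      apply Real.sqrt_le_sqrt
      nlinarith [pow_pos hc0 d]
    linarith
  have hβd : β^d = Real.sqrt 2 ^ d * (r ^ d * Real.sqrt c ^ d) := by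
    rw [hβ_def, mul_pow, mul_pow]
  have key : Real.sqrt (α * (1-r)) * Real.sqrt (2*α) * β^d
      ≤ Real.sqrt (α * 2 ^ d * (1 - r ^ d)) * (r ^ d * (S + 1)) := by
    calc Real.sqrt (α*(1-r)) * Real.sqrt (2*α) * β^d
        = (Real.sqrt (α*(1-r)) * Real.sqrt 2 ^ d) * ((Real.sqrt (2*α) * Real.sqrt c ^ d) * r^d) := by
          rw [hβd]; ring
      _ ≤ Real.sqrt (α * 2 ^ d * (1 - r ^ d)) * ((S+1) * r^d) := by
          apply mul_le_mul h1 (mul_le_mul_of_nonneg_right h2 hrd0.le) (by positivity)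
            (Real.sqrt_nonneg _)
      _ = Real.sqrt (α * 2 ^ d * (1 - r ^ d)) * (r^d * (S+1)) := by ring
  rw [div_div_eq_mul_div, hC_def, div_mul_eq_mul_div]
  exact div_le_div_of_nonneg_right key h2α.le
end
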